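/- With the notation and assumptions of the previous result (commuting quasi-homogeneous vector fields F of degree 1 and G of degree γ, indicial locus c of F), if G(c) ≠ 0 then -γ is an eigenvalue of the Kovalevskaya matrix K(c) of F at c. -/
import Mathlib


open MvPolynomial

private lemma eval_aeval' {σ τ : Type*} (s : σ → MvPolynomial τ ℂ)
    (y : τ → ℂ) (p : MvPolynomial σ ℂ) :
    eval y (aeval s p) = eval (fun j => eval y (s j)) p := by
  induction p using MvPolynomial.induction_on with
  | C a => simp
  | add p q hp hq => rw [map_add, map_add, hp, hq, map_add]
  | mul_X p j hp => rw [map_mul, aeval_X, map_mul, hp, map_mul, eval_X]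

private lemma pderiv_aeval_none' {m : ℕ}
    (s : Fin m → MvPolynomial (Option (Fin m)) ℂ) (p : MvPolynomial (Fin m) ℂ) :
    pderiv none (aeval s p) = ∑ j, aeval s (pderiv j p) * pderiv none (s j) := by
  induction p using MvPolynomial.induction_on with
  | C a => simp
  | add p q hp hq =>
    rw [map_add, map_add, hp, hq, ← Finset.sum_add_distrib]
    exact Finset.sum_congr rfl fun k _ => by simp [add_mul]
  | mul_X p j hp =>
    rw [map_mul, aeval_X, pderiv_mul, hp]
    have hterm : ∀ k ∈ Finset.univ, aeval s (pderiv k (p * X j)) * pderiv none (s k)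
        = (aeval s (pderiv k p) * pderiv none (s k)) * s j
          + (if k = j then aeval s p * pderiv none (s j) else 0) := by
      intro k _
      rw [pderiv_mul]
      by_cases h : k = j
      · subst h; simp; ring
      · simp [h]; ring
    rw [Finset.sum_congr rfl hterm, Finset.sum_add_distrib, Finset.sum_ite_eq' Finset.univ j,
      ← Finset.sum_mul]
    simp [add_comm]

private lemma pderiv_none_rename_some' {m : ℕ} (p : MvPolynomial (Fin m) ℂ) :
    pderiv (none : Option (Fin m)) (rename some p) = 0 := by
  apply pderiv_eq_zero_of_notMem_vars
  intro h
  have := vars_rename some p h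
  simp at this

private lemma euler' {m : ℕ} (a : Fin m → ℕ) (w : ℕ) (p : MvPolynomial (Fin m) ℂ)
    (h : ∀ (lam : ℂ) (x : Fin m → ℂ),
      eval (fun j => lam ^ (a j) * x j) p = lam ^ w * eval x p)
    (x : Fin m → ℂ) :
    ∑ j, (a j : ℂ) * x j * eval x (pderiv j p) = (w : ℂ) * eval x p := by
  set s : Fin m → MvPolynomial (Option (Fin m)) ℂ :=
    fun j => X none ^ a j * X (some j) with hs
  have H : aeval s p = X (none : Option (Fin m)) ^ w * rename some p := by
    apply MvPolynomial.funext
    intro y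
    rw [eval_aeval']
    have h1 := h (y none) (fun j => y (some j))
    simp only [hs, map_mul, map_pow, eval_X]
    rw [eval_rename]
    exact h1
  have H2 := congrArg (pderiv (none : Option (Fin m))) H
  rw [pderiv_aeval_none', pderiv_mul, pderiv_none_rename_some', pderiv_pow, pderiv_X_self] at H2
  set y0 : Option (Fin m) → ℂ := fun o => o.elim 1 x with hy0
  have hy0n : y0 none = 1 := rfl
  have hy0s : ∀ j, y0 (some j) = x j := fun j => rfl
  calc ∑ j, (a j : ℂ) * x j * eval x (pderiv j p)
      = eval y0 (∑ j, aeval s (pderiv j p) * pderiv none (s j)) := by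
        rw [map_sum]
        refine (Finset.sum_congr rfl fun j _ => ?_).symm
        rw [map_mul, eval_aeval']
        have e1 : eval y0 (pderiv none (s j)) = (a j : ℂ) * x j := by
          simp [hs, pderiv_mul, pderiv_pow, hy0n, hy0s]
          ring
        have e2 : (fun k => eval y0 (s k)) = x := by
          funext k
          simp [hs, hy0n, hy0s]
        rw [e1, e2]
        ring
    _ = (w : ℂ) * eval x p := by
        rw [H2]
        have e3 : eval (y0 ∘ some) p = eval x p := by
          congr 1
        simp [eval_rename, hy0n, e3]

/-- If G(c) ≠ 0 then -γ is an eigenvalue of the Kovalevskaya matrix of F at c. -/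
theorem neg_gamma_eigenvalue_of_G_ne_zero
    (m : ℕ) (f g : Fin m → MvPolynomial (Fin m) ℂ) (a : Fin m → ℕ) (γ : ℕ)
    (ha : ∀ i, 0 < a i)
    (hQHf : ∀ (lam : ℂ) (x : Fin m → ℂ) (i : Fin m),
      eval (fun j => lam ^ (a j) * x j) (f i) = lam ^ (a i + 1) * eval x (f i))
    (hQHg : ∀ (lam : ℂ) (x : Fin m → ℂ) (i : Fin m),
      eval (fun j => lam ^ (a j) * x j) (g i) = lam ^ (a i + γ) * eval x (g i))
    (hcomm : ∀ (x : Fin m → ℂ) (i : Fin m),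
      ∑ j, (eval x (f j) * eval x (pderiv j (g i))
            - eval x (g j) * eval x (pderiv j (f i))) = 0)
    (c : Fin m → ℂ) (hc : c ≠ 0)
    (hloc : ∀ i, -(a i : ℂ) * c i = eval c (f i))
    (K : Matrix (Fin m) (Fin m) ℂ)
    (hK : K = Matrix.of fun i j =>
      eval c (pderiv j (f i)) + (a i : ℂ) * (if i = j then 1 else 0))
    (hGc : (fun i => eval c (g i)) ≠ 0) :
    Module.End.HasEigenvalue (Matrix.toLin' K) (-(γ : ℂ)) := by
  subst hK
  set v : Fin m → ℂ := fun i => eval c (g i) with hv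
  have key : ∀ i, ∑ j, eval c (pderiv j (f i)) * v j = -((a i : ℂ) + γ) * v i := by
    intro i
    have he := euler' a (a i + γ) (g i) (fun lam x => hQHg lam x i) c
    push_cast at he
    have hcm := hcomm c i
    rw [Finset.sum_sub_distrib, sub_eq_zero] at hcm
    have h1 : ∑ j, eval c (f j) * eval c (pderiv j (g i))
        = -(((a i : ℂ) + γ) * eval c (g i)) := by
      have e : ∀ j ∈ Finset.univ, eval c (f j) * eval c (pderiv j (g i))
          = -((a j : ℂ) * c j * eval c (pderiv j (g i))) := fun j _ => by
        rw [← hloc j]; ring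
      rw [Finset.sum_congr rfl e, Finset.sum_neg_distrib, he]
    rw [Finset.sum_congr rfl (fun j (_ : j ∈ Finset.univ) =>
      mul_comm (eval c (pderiv j (f i))) (v j)), ← hcm, h1, neg_mul]
  have hm : (Matrix.toLin' (Matrix.of fun i j =>
      eval c (pderiv j (f i)) + (a i : ℂ) * (if i = j then 1 else 0))) v = (-(γ:ℂ)) • v := by
    rw [Matrix.toLin'_apply]
    funext i
    simp only [Matrix.mulVec, dotProduct, Matrix.of_apply, Pi.smul_apply, smul_eq_mul]
    rw [Finset.sum_congr rfl (fun j (_ : j ∈ Finset.univ) => add_mul _ _ _),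
      Finset.sum_add_distrib, key i]
    have : ∑ j, ((a i : ℂ) * if i = j then 1 else 0) * v j = (a i : ℂ) * v i := by
      simp [ite_mul, mul_ite, Finset.sum_ite_eq]
    rw [this]
    ring
  exact Module.End.hasEigenvalue_of_hasEigenvector
    ⟨Module.End.mem_eigenspace_iff.mpr hm, hGc⟩
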